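/- For smooth functions G = Σᵢ hᵢ(u, uⁱ_x) and H = Σᵢ uⁱhᵢ(u, uⁱ_x), the components of the bivector-derived expression Xⁱ satisfy ∂Xⁱ/∂uⁱ_xx = (3/2)fⁱ uⁱ_x ∂²hᵢ/∂(uⁱ_x)², where Xⁱ = gⁱ∂_x(δI/δuⁱ) + (1/2)(∂_xgⁱ)(δI/δuⁱ) + Σ_α B^{iα}δI/δu^α - fⁱ∂_x(δJ/δuⁱ) - (1/2)(∂_xfⁱ)(δJ/δuⁱ) - Σ_α A^{iα}δJ/δu^α, with I = ∫G dx, J = ∫H dx, gⁱ = uⁱfⁱ, under the assumption that hᵢ depends only on u and uⁱ_x. -/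

import Mathlib

/-- The variational derivative `δ(∫F dx)/δu^k = ∂F/∂u^k - ∂_x(∂F/∂u^k_x)` of a
density `F = F(u, u_x)` depending only on `u` and `u_x`, evaluated on the jet
`q = (u, u_x, u_xx)`; the total derivative `∂_x` of a function of `(u,u_x)` at
`(u,u_x)` is its differential applied in the direction `(u_x,u_xx)`. -/
noncomputable def eulOp (n : ℕ) (F : (Fin n → ℝ) × (Fin n → ℝ) → ℝ) (k : Fin n)
    (q : (Fin n → ℝ) × (Fin n → ℝ) × (Fin n → ℝ)) : ℝ :=
  fderiv ℝ F (q.1, q.2.1) ((Pi.single k 1 : Fin n → ℝ), (0 : Fin n → ℝ))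
    - fderiv ℝ
        (fun p : (Fin n → ℝ) × (Fin n → ℝ) =>
          fderiv ℝ F p ((0 : Fin n → ℝ), (Pi.single k 1 : Fin n → ℝ)))
        (q.1, q.2.1) (q.2.1, q.2.2)


open ContinuousLinearMap

noncomputable section XbihamAux

variable {n : ℕ}

def mW (n : ℕ) (j : Fin n) : ((Fin n → ℝ) × (Fin n → ℝ)) →L[ℝ] ((Fin n → ℝ) × ℝ) :=
  (fst ℝ (Fin n → ℝ) (Fin n → ℝ)).prod ((proj j).comp (snd ℝ (Fin n → ℝ) (Fin n → ℝ)))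

@[simp] lemma mW_apply (j : Fin n) (p : (Fin n → ℝ) × (Fin n → ℝ)) :
    mW n j p = (p.1, p.2 j) := rfl

def pr1 (n : ℕ) (j : Fin n) : ((Fin n → ℝ) × (Fin n → ℝ)) →L[ℝ] ℝ :=
  (proj j).comp (fst ℝ (Fin n → ℝ) (Fin n → ℝ))

@[simp] lemma pr1_apply (j : Fin n) (p : (Fin n → ℝ) × (Fin n → ℝ)) :
    pr1 n j p = p.1 j := rfl

variable {h : Fin n → ((Fin n → ℝ) × ℝ) → ℝ}

lemma top_le' : ((⊤ : ℕ∞) : WithTop ℕ∞) ≠ 0 := by simp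

lemma contDiff_fderiv_apply {E : Type*} [NormedAddCommGroup E] [NormedSpace ℝ E]
    {F : E → ℝ} (hF : ContDiff ℝ (⊤ : ℕ∞) F) (w : E) :
    ContDiff ℝ (⊤ : ℕ∞) (fun x => fderiv ℝ F x w) :=
  (ContinuousLinearMap.apply ℝ ℝ w).contDiff.comp
    (hF.fderiv_right (le_of_eq ENat.coe_top_add_one))

lemma hasFDerivAt_G (hh : ∀ i, ContDiff ℝ (⊤ : ℕ∞) (h i)) (p : (Fin n → ℝ) × (Fin n → ℝ)) :
    HasFDerivAt (fun p : (Fin n → ℝ) × (Fin n → ℝ) => ∑ j, h j (p.1, p.2 j))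
      (∑ j, (fderiv ℝ (h j) (p.1, p.2 j)).comp (mW n j)) p := by
  apply HasFDerivAt.fun_sum
  intro j _
  exact (((hh j).differentiable top_le' (p.1, p.2 j)).hasFDerivAt).comp p (mW n j).hasFDerivAt

lemma fderiv_G_apply (hh : ∀ i, ContDiff ℝ (⊤ : ℕ∞) (h i)) (p v : (Fin n → ℝ) × (Fin n → ℝ)) :
    fderiv ℝ (fun p : (Fin n → ℝ) × (Fin n → ℝ) => ∑ j, h j (p.1, p.2 j)) p v
      = ∑ j, fderiv ℝ (h j) (p.1, p.2 j) (v.1, v.2 j) := by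
  rw [(hasFDerivAt_G hh p).fderiv]
  simp

lemma hasFDerivAt_H (hh : ∀ i, ContDiff ℝ (⊤ : ℕ∞) (h i)) (p : (Fin n → ℝ) × (Fin n → ℝ)) :
    HasFDerivAt (fun p : (Fin n → ℝ) × (Fin n → ℝ) => ∑ j, p.1 j * h j (p.1, p.2 j))
      (∑ j, (p.1 j • ((fderiv ℝ (h j) (p.1, p.2 j)).comp (mW n j))
        + h j (p.1, p.2 j) • (pr1 n j))) p := by
  apply HasFDerivAt.fun_sum
  intro j _
  exact HasFDerivAt.mul ((pr1 n j).hasFDerivAt)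
    ((((hh j).differentiable top_le' (p.1, p.2 j)).hasFDerivAt).comp p (mW n j).hasFDerivAt)

lemma fderiv_H_apply (hh : ∀ i, ContDiff ℝ (⊤ : ℕ∞) (h i)) (p v : (Fin n → ℝ) × (Fin n → ℝ)) :
    fderiv ℝ (fun p : (Fin n → ℝ) × (Fin n → ℝ) => ∑ j, p.1 j * h j (p.1, p.2 j)) p v
      = ∑ j, (p.1 j * fderiv ℝ (h j) (p.1, p.2 j) (v.1, v.2 j)
          + h j (p.1, p.2 j) * v.1 j) := by
  rw [(hasFDerivAt_H hh p).fderiv]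
  simp [smul_eq_mul]

lemma fderiv_comp_mW {F : (Fin n → ℝ) × ℝ → ℝ} (hF : ContDiff ℝ (⊤ : ℕ∞) F) (k : Fin n)
    (x v : (Fin n → ℝ) × (Fin n → ℝ)) :
    fderiv ℝ (fun p : (Fin n → ℝ) × (Fin n → ℝ) => F (p.1, p.2 k)) x v
      = fderiv ℝ F (x.1, x.2 k) (v.1, v.2 k) := by
  have : HasFDerivAt (fun p : (Fin n → ℝ) × (Fin n → ℝ) => F (p.1, p.2 k))
      ((fderiv ℝ F (x.1, x.2 k)).comp (mW n k)) x :=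
    ((hF.differentiable top_le' (x.1, x.2 k)).hasFDerivAt).comp x (mW n k).hasFDerivAt
  rw [this.fderiv]
  simp

lemma eulOp_G_eq (hh : ∀ i, ContDiff ℝ (⊤ : ℕ∞) (h i)) (k : Fin n)
    (q : (Fin n → ℝ) × (Fin n → ℝ) × (Fin n → ℝ)) :
    eulOp n (fun p => ∑ j, h j (p.1, p.2 j)) k q
      = (∑ j, fderiv ℝ (h j) (q.1, q.2.1 j) ((Pi.single k 1 : Fin n → ℝ), (0 : ℝ)))
        - fderiv ℝ (fun p : (Fin n → ℝ) × ℝ => fderiv ℝ (h k) p ((0 : Fin n → ℝ), (1 : ℝ)))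
            (q.1, q.2.1 k) (q.2.1, q.2.2 k) := by
  rw [eulOp]
  have e1 : (fun p : (Fin n → ℝ) × (Fin n → ℝ) =>
      fderiv ℝ (fun p : (Fin n → ℝ) × (Fin n → ℝ) => ∑ j, h j (p.1, p.2 j)) p
        ((0 : Fin n → ℝ), (Pi.single k 1 : Fin n → ℝ)))
      = fun p => (fun w : (Fin n → ℝ) × ℝ => fderiv ℝ (h k) w ((0 : Fin n → ℝ), (1 : ℝ)))
          (p.1, p.2 k) := by
    funext p
    rw [fderiv_G_apply hh]
    rw [Finset.sum_eq_single k]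
    · simp
    · intro j _ hjk
      have : ((0 : Fin n → ℝ), (Pi.single k (1:ℝ) : Fin n → ℝ) j) = (0 : (Fin n → ℝ) × ℝ) := by
        simp [Pi.single_eq_of_ne hjk]
      rw [this, map_zero]
    · intro habs; exact absurd (Finset.mem_univ k) habs
  rw [e1, fderiv_comp_mW (contDiff_fderiv_apply (hh k) _) k]
  rw [fderiv_G_apply hh]
  simp

lemma eulOp_H_eq (hh : ∀ i, ContDiff ℝ (⊤ : ℕ∞) (h i)) (k : Fin n)
    (q : (Fin n → ℝ) × (Fin n → ℝ) × (Fin n → ℝ)) :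
    eulOp n (fun p => ∑ j, p.1 j * h j (p.1, p.2 j)) k q
      = (h k (q.1, q.2.1 k)
          + ∑ j, q.1 j * fderiv ℝ (h j) (q.1, q.2.1 j) ((Pi.single k 1 : Fin n → ℝ), (0 : ℝ)))
        - (q.1 k * fderiv ℝ (fun p : (Fin n → ℝ) × ℝ =>
              fderiv ℝ (h k) p ((0 : Fin n → ℝ), (1 : ℝ))) (q.1, q.2.1 k) (q.2.1, q.2.2 k)
           + fderiv ℝ (h k) (q.1, q.2.1 k) ((0 : Fin n → ℝ), (1 : ℝ)) * q.2.1 k) := by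
  rw [eulOp]
  have e1 : (fun p : (Fin n → ℝ) × (Fin n → ℝ) =>
      fderiv ℝ (fun p : (Fin n → ℝ) × (Fin n → ℝ) => ∑ j, p.1 j * h j (p.1, p.2 j)) p
        ((0 : Fin n → ℝ), (Pi.single k 1 : Fin n → ℝ)))
      = fun p => p.1 k * (fun w : (Fin n → ℝ) × ℝ =>
          fderiv ℝ (h k) w ((0 : Fin n → ℝ), (1 : ℝ))) (p.1, p.2 k) := by
    funext p
    rw [fderiv_H_apply hh]
    rw [Finset.sum_eq_single k]
    · simp
    · intro j _ hjk
      have : ((0 : Fin n → ℝ), (Pi.single k (1:ℝ) : Fin n → ℝ) j) = (0 : (Fin n → ℝ) × ℝ) := by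
        simp [Pi.single_eq_of_ne hjk]
      rw [this, map_zero]
      simp
    · intro habs; exact absurd (Finset.mem_univ k) habs
  rw [e1]
  have hR : ContDiff ℝ (⊤ : ℕ∞) (fun w : (Fin n → ℝ) × ℝ =>
      fderiv ℝ (h k) w ((0 : Fin n → ℝ), (1 : ℝ))) := contDiff_fderiv_apply (hh k) _
  have hmul : HasFDerivAt (fun p : (Fin n → ℝ) × (Fin n → ℝ) =>
      p.1 k * (fun w : (Fin n → ℝ) × ℝ => fderiv ℝ (h k) w ((0 : Fin n → ℝ), (1 : ℝ)))
        (p.1, p.2 k))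
      ((q.1 k) • ((fderiv ℝ (fun w : (Fin n → ℝ) × ℝ =>
          fderiv ℝ (h k) w ((0 : Fin n → ℝ), (1 : ℝ))) (q.1, q.2.1 k)).comp (mW n k))
        + ((fun w : (Fin n → ℝ) × ℝ => fderiv ℝ (h k) w ((0 : Fin n → ℝ), (1 : ℝ)))
            (q.1, q.2.1 k)) • (pr1 n k))
      (q.1, q.2.1) := by
    have hc := (((hR.differentiable top_le' (q.1, q.2.1 k)).hasFDerivAt).comp (q.1, q.2.1)
        (mW n k).hasFDerivAt)
    exact HasFDerivAt.fun_mul ((pr1 n k).hasFDerivAt) hc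
  rw [hmul.fderiv, fderiv_H_apply hh]
  have e2 : ∑ j, (q.1 j * fderiv ℝ (h j) (q.1, q.2.1 j)
        ((Pi.single k 1 : Fin n → ℝ), ((0 : Fin n → ℝ)) j)
      + h j (q.1, q.2.1 j) * (Pi.single k 1 : Fin n → ℝ) j)
      = (∑ j, q.1 j * fderiv ℝ (h j) (q.1, q.2.1 j) ((Pi.single k 1 : Fin n → ℝ), (0 : ℝ)))
        + h k (q.1, q.2.1 k) := by
    rw [Finset.sum_add_distrib]
    congr 1
    rw [Finset.sum_eq_single k]
    · simp
    · intro j _ hjk; simp [Pi.single_eq_of_ne hjk]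
    · intro habs; exact absurd (Finset.mem_univ k) habs
  rw [e2]
  simp only [ContinuousLinearMap.add_apply, ContinuousLinearMap.coe_smul', Pi.smul_apply,
    ContinuousLinearMap.coe_comp', Function.comp_apply, mW_apply, pr1_apply, smul_eq_mul]
  ring


def mQ (n : ℕ) (j : Fin n) :
    ((Fin n → ℝ) × (Fin n → ℝ) × (Fin n → ℝ)) →L[ℝ] ((Fin n → ℝ) × ℝ) :=
  (fst ℝ (Fin n → ℝ) ((Fin n → ℝ) × (Fin n → ℝ))).prod
    ((proj j).comp ((fst ℝ (Fin n → ℝ) (Fin n → ℝ)).comp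
      (snd ℝ (Fin n → ℝ) ((Fin n → ℝ) × (Fin n → ℝ)))))

@[simp] lemma mQ_apply (j : Fin n) (q : (Fin n → ℝ) × (Fin n → ℝ) × (Fin n → ℝ)) :
    mQ n j q = (q.1, q.2.1 j) := rfl

def rQ (n : ℕ) (i : Fin n) :
    ((Fin n → ℝ) × (Fin n → ℝ) × (Fin n → ℝ)) →L[ℝ] ((Fin n → ℝ) × ℝ) :=
  ((fst ℝ (Fin n → ℝ) (Fin n → ℝ)).comp
      (snd ℝ (Fin n → ℝ) ((Fin n → ℝ) × (Fin n → ℝ)))).prod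
    ((proj i).comp ((snd ℝ (Fin n → ℝ) (Fin n → ℝ)).comp
      (snd ℝ (Fin n → ℝ) ((Fin n → ℝ) × (Fin n → ℝ)))))

@[simp] lemma rQ_apply (i : Fin n) (q : (Fin n → ℝ) × (Fin n → ℝ) × (Fin n → ℝ)) :
    rQ n i q = (q.2.1, q.2.2 i) := rfl

lemma contDiff_fderiv' {E : Type*} [NormedAddCommGroup E] [NormedSpace ℝ E]
    {F : E → ℝ} (hF : ContDiff ℝ (⊤ : ℕ∞) F) :
    ContDiff ℝ (⊤ : ℕ∞) (fderiv ℝ F) :=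
  hF.fderiv_right (le_of_eq ENat.coe_top_add_one)

lemma fderiv_eulOp_G_apply (hh : ∀ i, ContDiff ℝ (⊤ : ℕ∞) (h i)) (i : Fin n)
    (x v : (Fin n → ℝ) × (Fin n → ℝ) × (Fin n → ℝ)) :
    fderiv ℝ (fun q : (Fin n → ℝ) × (Fin n → ℝ) × (Fin n → ℝ) =>
        eulOp n (fun p => ∑ j, h j (p.1, p.2 j)) i q) x v
      = (∑ j, fderiv ℝ (fderiv ℝ (h j)) (x.1, x.2.1 j) (v.1, v.2.1 j)
            ((Pi.single i 1 : Fin n → ℝ), (0 : ℝ)))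
        - (fderiv ℝ (fderiv ℝ (fun w : (Fin n → ℝ) × ℝ =>
              fderiv ℝ (h i) w ((0 : Fin n → ℝ), (1 : ℝ))))
              (x.1, x.2.1 i) (v.1, v.2.1 i) (x.2.1, x.2.2 i)
           + fderiv ℝ (fun w : (Fin n → ℝ) × ℝ =>
              fderiv ℝ (h i) w ((0 : Fin n → ℝ), (1 : ℝ)))
              (x.1, x.2.1 i) (v.2.1, v.2.2 i)) := by
  set R : (Fin n → ℝ) × ℝ → ℝ :=
    fun w => fderiv ℝ (h i) w ((0 : Fin n → ℝ), (1 : ℝ)) with hRdef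
  have funeq : (fun q : (Fin n → ℝ) × (Fin n → ℝ) × (Fin n → ℝ) =>
      eulOp n (fun p => ∑ j, h j (p.1, p.2 j)) i q)
      = fun q => (∑ j, (fun w => fderiv ℝ (h j) w ((Pi.single i 1 : Fin n → ℝ), (0 : ℝ)))
            (mQ n j q))
          - (fun y : ((Fin n → ℝ) × ℝ) × ((Fin n → ℝ) × ℝ) => fderiv ℝ R y.1 y.2)
              (mQ n i q, rQ n i q) := by
    funext q
    rw [eulOp_G_eq hh i q]
    simp
    rfl
  rw [funeq]
  have hR : ContDiff ℝ (⊤ : ℕ∞) R := contDiff_fderiv_apply (hh i) _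
  have h1 : ∀ j : Fin n, HasFDerivAt (fun q : (Fin n → ℝ) × (Fin n → ℝ) × (Fin n → ℝ) =>
      (fun w => fderiv ℝ (h j) w ((Pi.single i 1 : Fin n → ℝ), (0 : ℝ))) (mQ n j q))
      (((fderiv ℝ (fderiv ℝ (h j)) (x.1, x.2.1 j)).flip
          ((Pi.single i 1 : Fin n → ℝ), (0 : ℝ))).comp (mQ n j)) x := by
    intro j
    have hc : HasFDerivAt (fun q : (Fin n → ℝ) × (Fin n → ℝ) × (Fin n → ℝ) =>
        fderiv ℝ (h j) (mQ n j q))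
        ((fderiv ℝ (fderiv ℝ (h j)) (x.1, x.2.1 j)).comp (mQ n j)) x :=
      (((contDiff_fderiv' (hh j)).differentiable top_le' (x.1, x.2.1 j)).hasFDerivAt).comp x
        (mQ n j).hasFDerivAt
    have := hc.clm_apply
      (hasFDerivAt_const ((Pi.single i 1 : Fin n → ℝ), (0 : ℝ)) x)
    refine HasFDerivAt.congr_fderiv this ?_
    ext z <;> simp
  have hc2 : HasFDerivAt (fun q : (Fin n → ℝ) × (Fin n → ℝ) × (Fin n → ℝ) =>
      fderiv ℝ R (mQ n i q))
      ((fderiv ℝ (fderiv ℝ R) (x.1, x.2.1 i)).comp (mQ n i)) x :=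
    (((contDiff_fderiv' hR).differentiable top_le' (x.1, x.2.1 i)).hasFDerivAt).comp x
      (mQ n i).hasFDerivAt
  have h2 : HasFDerivAt (fun q : (Fin n → ℝ) × (Fin n → ℝ) × (Fin n → ℝ) =>
      (fun y : ((Fin n → ℝ) × ℝ) × ((Fin n → ℝ) × ℝ) => fderiv ℝ R y.1 y.2)
        (mQ n i q, rQ n i q))
      ((fderiv ℝ R (x.1, x.2.1 i)).comp (rQ n i)
        + ((fderiv ℝ (fderiv ℝ R) (x.1, x.2.1 i)).comp (mQ n i)).flip (x.2.1, x.2.2 i)) x := by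
    have := hc2.clm_apply (rQ n i).hasFDerivAt
    exact this
  have htot := ((HasFDerivAt.fun_sum (fun j (_ : j ∈ Finset.univ) => h1 j)).fun_sub h2).fderiv
  rw [htot]
  simp
  ring


def pq1 (n : ℕ) (j : Fin n) : ((Fin n → ℝ) × (Fin n → ℝ) × (Fin n → ℝ)) →L[ℝ] ℝ :=
  (proj j).comp (fst ℝ (Fin n → ℝ) ((Fin n → ℝ) × (Fin n → ℝ)))

@[simp] lemma pq1_apply (j : Fin n) (q : (Fin n → ℝ) × (Fin n → ℝ) × (Fin n → ℝ)) :
    pq1 n j q = q.1 j := rfl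

def pq21 (n : ℕ) (i : Fin n) : ((Fin n → ℝ) × (Fin n → ℝ) × (Fin n → ℝ)) →L[ℝ] ℝ :=
  (proj i).comp ((fst ℝ (Fin n → ℝ) (Fin n → ℝ)).comp
    (snd ℝ (Fin n → ℝ) ((Fin n → ℝ) × (Fin n → ℝ))))

@[simp] lemma pq21_apply (i : Fin n) (q : (Fin n → ℝ) × (Fin n → ℝ) × (Fin n → ℝ)) :
    pq21 n i q = q.2.1 i := rfl

lemma fderiv_eulOp_H_apply (hh : ∀ i, ContDiff ℝ (⊤ : ℕ∞) (h i)) (i : Fin n)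
    (x v : (Fin n → ℝ) × (Fin n → ℝ) × (Fin n → ℝ)) :
    fderiv ℝ (fun q : (Fin n → ℝ) × (Fin n → ℝ) × (Fin n → ℝ) =>
        eulOp n (fun p => ∑ j, p.1 j * h j (p.1, p.2 j)) i q) x v
      = (fderiv ℝ (h i) (x.1, x.2.1 i) (v.1, v.2.1 i)
          + ∑ j, (x.1 j * (fderiv ℝ (fderiv ℝ (h j)) (x.1, x.2.1 j) (v.1, v.2.1 j)
                ((Pi.single i 1 : Fin n → ℝ), (0 : ℝ)))
              + fderiv ℝ (h j) (x.1, x.2.1 j) ((Pi.single i 1 : Fin n → ℝ), (0 : ℝ)) * v.1 j))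
        - (x.1 i * (fderiv ℝ (fun w : (Fin n → ℝ) × ℝ =>
                fderiv ℝ (h i) w ((0 : Fin n → ℝ), (1 : ℝ))) (x.1, x.2.1 i) (v.2.1, v.2.2 i)
              + fderiv ℝ (fderiv ℝ (fun w : (Fin n → ℝ) × ℝ =>
                  fderiv ℝ (h i) w ((0 : Fin n → ℝ), (1 : ℝ))))
                  (x.1, x.2.1 i) (v.1, v.2.1 i) (x.2.1, x.2.2 i))
           + fderiv ℝ (fun w : (Fin n → ℝ) × ℝ =>
                fderiv ℝ (h i) w ((0 : Fin n → ℝ), (1 : ℝ))) (x.1, x.2.1 i) (x.2.1, x.2.2 i)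
              * v.1 i
           + (fderiv ℝ (h i) (x.1, x.2.1 i) ((0 : Fin n → ℝ), (1 : ℝ)) * v.2.1 i
              + x.2.1 i * fderiv ℝ (fun w : (Fin n → ℝ) × ℝ =>
                  fderiv ℝ (h i) w ((0 : Fin n → ℝ), (1 : ℝ)))
                  (x.1, x.2.1 i) (v.1, v.2.1 i))) := by
  have funeq : (fun q : (Fin n → ℝ) × (Fin n → ℝ) × (Fin n → ℝ) =>
      eulOp n (fun p => ∑ j, p.1 j * h j (p.1, p.2 j)) i q)
      = fun q => (h i (mQ n i q)
          + ∑ j, pq1 n j q * (fun w => fderiv ℝ (h j) w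
              ((Pi.single i 1 : Fin n → ℝ), (0 : ℝ))) (mQ n j q))
        - ((pq1 n i q * (fun y : ((Fin n → ℝ) × ℝ) × ((Fin n → ℝ) × ℝ) =>
              fderiv ℝ (fun w : (Fin n → ℝ) × ℝ =>
                fderiv ℝ (h i) w ((0 : Fin n → ℝ), (1 : ℝ))) y.1 y.2) (mQ n i q, rQ n i q))
           + ((fun w : (Fin n → ℝ) × ℝ =>
                fderiv ℝ (h i) w ((0 : Fin n → ℝ), (1 : ℝ))) (mQ n i q)) * pq21 n i q) := by
    funext q
    rw [eulOp_H_eq hh i q]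
    simp
  rw [funeq]
  have hR : ContDiff ℝ (⊤ : ℕ∞) (fun w : (Fin n → ℝ) × ℝ =>
      fderiv ℝ (h i) w ((0 : Fin n → ℝ), (1 : ℝ))) := contDiff_fderiv_apply (hh i) _
  have h0 : HasFDerivAt (fun q : (Fin n → ℝ) × (Fin n → ℝ) × (Fin n → ℝ) => h i (mQ n i q))
      ((fderiv ℝ (h i) (x.1, x.2.1 i)).comp (mQ n i)) x :=
    (((hh i).differentiable top_le' (x.1, x.2.1 i)).hasFDerivAt).comp x (mQ n i).hasFDerivAt
  have h1 : ∀ j : Fin n, HasFDerivAt (fun q : (Fin n → ℝ) × (Fin n → ℝ) × (Fin n → ℝ) =>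
      (fun w => fderiv ℝ (h j) w ((Pi.single i 1 : Fin n → ℝ), (0 : ℝ))) (mQ n j q))
      (((fderiv ℝ (fderiv ℝ (h j)) (x.1, x.2.1 j)).flip
          ((Pi.single i 1 : Fin n → ℝ), (0 : ℝ))).comp (mQ n j)) x := by
    intro j
    have hc : HasFDerivAt (fun q : (Fin n → ℝ) × (Fin n → ℝ) × (Fin n → ℝ) =>
        fderiv ℝ (h j) (mQ n j q))
        ((fderiv ℝ (fderiv ℝ (h j)) (x.1, x.2.1 j)).comp (mQ n j)) x :=
      (((contDiff_fderiv' (hh j)).differentiable top_le' (x.1, x.2.1 j)).hasFDerivAt).comp x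
        (mQ n j).hasFDerivAt
    have := hc.clm_apply
      (hasFDerivAt_const ((Pi.single i 1 : Fin n → ℝ), (0 : ℝ)) x)
    refine HasFDerivAt.congr_fderiv this ?_
    ext z <;> simp
  have hP1 : ∀ j : Fin n, HasFDerivAt (fun q : (Fin n → ℝ) × (Fin n → ℝ) × (Fin n → ℝ) =>
      pq1 n j q * (fun w => fderiv ℝ (h j) w
        ((Pi.single i 1 : Fin n → ℝ), (0 : ℝ))) (mQ n j q))
      (x.1 j • (((fderiv ℝ (fderiv ℝ (h j)) (x.1, x.2.1 j)).flip
          ((Pi.single i 1 : Fin n → ℝ), (0 : ℝ))).comp (mQ n j))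
        + (fderiv ℝ (h j) (x.1, x.2.1 j) ((Pi.single i 1 : Fin n → ℝ), (0 : ℝ))) • pq1 n j) x :=
    fun j => HasFDerivAt.mul (pq1 n j).hasFDerivAt (h1 j)
  have hc2 : HasFDerivAt (fun q : (Fin n → ℝ) × (Fin n → ℝ) × (Fin n → ℝ) =>
      fderiv ℝ (fun w : (Fin n → ℝ) × ℝ =>
        fderiv ℝ (h i) w ((0 : Fin n → ℝ), (1 : ℝ))) (mQ n i q))
      ((fderiv ℝ (fderiv ℝ (fun w : (Fin n → ℝ) × ℝ =>
        fderiv ℝ (h i) w ((0 : Fin n → ℝ), (1 : ℝ)))) (x.1, x.2.1 i)).comp (mQ n i)) x :=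
    (((contDiff_fderiv' hR).differentiable top_le' (x.1, x.2.1 i)).hasFDerivAt).comp x
      (mQ n i).hasFDerivAt
  have h2 : HasFDerivAt (fun q : (Fin n → ℝ) × (Fin n → ℝ) × (Fin n → ℝ) =>
      (fun y : ((Fin n → ℝ) × ℝ) × ((Fin n → ℝ) × ℝ) =>
        fderiv ℝ (fun w : (Fin n → ℝ) × ℝ =>
          fderiv ℝ (h i) w ((0 : Fin n → ℝ), (1 : ℝ))) y.1 y.2) (mQ n i q, rQ n i q))
      ((fderiv ℝ (fun w : (Fin n → ℝ) × ℝ =>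
          fderiv ℝ (h i) w ((0 : Fin n → ℝ), (1 : ℝ))) (x.1, x.2.1 i)).comp (rQ n i)
        + ((fderiv ℝ (fderiv ℝ (fun w : (Fin n → ℝ) × ℝ =>
            fderiv ℝ (h i) w ((0 : Fin n → ℝ), (1 : ℝ)))) (x.1, x.2.1 i)).comp (mQ n i)).flip
            (x.2.1, x.2.2 i)) x := by
    have := hc2.clm_apply (rQ n i).hasFDerivAt
    exact this
  have hP2 := HasFDerivAt.fun_mul (pq1 n i).hasFDerivAt h2
  have hcR : HasFDerivAt (fun q : (Fin n → ℝ) × (Fin n → ℝ) × (Fin n → ℝ) =>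
      (fun w : (Fin n → ℝ) × ℝ =>
        fderiv ℝ (h i) w ((0 : Fin n → ℝ), (1 : ℝ))) (mQ n i q))
      ((fderiv ℝ (fun w : (Fin n → ℝ) × ℝ =>
        fderiv ℝ (h i) w ((0 : Fin n → ℝ), (1 : ℝ))) (x.1, x.2.1 i)).comp (mQ n i)) x := by
    have hc := ((hR.differentiable top_le' (x.1, x.2.1 i)).hasFDerivAt).comp x (mQ n i).hasFDerivAt
    exact hc
  have hP3 := HasFDerivAt.fun_mul hcR (pq21 n i).hasFDerivAt
  have htot := ((h0.fun_add (HasFDerivAt.fun_sum (fun j (_ : j ∈ Finset.univ) => hP1 j))).fun_sub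
    (hP2.fun_add hP3)).fderiv
  rw [htot]
  simp
  ring


/-- The `i`-th component of the bivector-derived vector field
`Xⁱ = gⁱ∂_x(δI/δuⁱ) + (1/2)(∂_xgⁱ)(δI/δuⁱ) + Σ_α B^{iα}δI/δu^α
      - fⁱ∂_x(δJ/δuⁱ) - (1/2)(∂_xfⁱ)(δJ/δuⁱ) - Σ_α A^{iα}δJ/δu^α`,
with `I = ∫G dx`, `J = ∫H dx`, `G = Σⱼ hⱼ(u,uʲ_x)`, `H = Σⱼ uʲhⱼ(u,uʲ_x)`,
`gⁱ = uⁱfⁱ`, and the first-degree coefficients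
`A^{ij} = (1/2)((fⁱ/fʲ)f^j_i uʲ_x - (fʲ/fⁱ)f^i_j uⁱ_x)`,
`B^{ij} = (1/2)((uⁱfⁱ/fʲ)f^j_i uʲ_x - (uʲfʲ/fⁱ)f^i_j uⁱ_x)`. -/
noncomputable def Xbiham (n : ℕ) (f : Fin n → (Fin n → ℝ) → ℝ)
    (h : Fin n → ((Fin n → ℝ) × ℝ) → ℝ) (i : Fin n)
    (u ux uxx uxxx : Fin n → ℝ) : ℝ :=
  let G : (Fin n → ℝ) × (Fin n → ℝ) → ℝ := fun p => ∑ j, h j (p.1, p.2 j)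
  let H : (Fin n → ℝ) × (Fin n → ℝ) → ℝ := fun p => ∑ j, p.1 j * h j (p.1, p.2 j)
  let A : Fin n → Fin n → ℝ := fun a b =>
    (1 / 2) * ((f a u / f b u) * fderiv ℝ (f b) u (Pi.single a 1) * ux b
      - (f b u / f a u) * fderiv ℝ (f a) u (Pi.single b 1) * ux a)
  let B : Fin n → Fin n → ℝ := fun a b =>
    (1 / 2) * ((u a * f a u / f b u) * fderiv ℝ (f b) u (Pi.single a 1) * ux b
      - (u b * f b u / f a u) * fderiv ℝ (f a) u (Pi.single b 1) * ux a)
  (u i * f i u) *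
      fderiv ℝ (fun q : (Fin n → ℝ) × (Fin n → ℝ) × (Fin n → ℝ) => eulOp n G i q)
        (u, ux, uxx) (ux, uxx, uxxx)
    + (1 / 2) * (fderiv ℝ (fun w : Fin n → ℝ => w i * f i w) u ux)
        * eulOp n G i (u, ux, uxx)
    + (∑ a, B i a * eulOp n G a (u, ux, uxx))
    - f i u *
        fderiv ℝ (fun q : (Fin n → ℝ) × (Fin n → ℝ) × (Fin n → ℝ) => eulOp n H i q)
          (u, ux, uxx) (ux, uxx, uxxx)
    - (1 / 2) * (fderiv ℝ (f i) u ux) * eulOp n H i (u, ux, uxx)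
    - ∑ a, A i a * eulOp n H a (u, ux, uxx)


section LineDerivs

variable {n : ℕ} {F : Type*} [NormedAddCommGroup F] [NormedSpace ℝ F]

lemma hasDerivAt_clm_line {E : Type*} [NormedAddCommGroup E] [NormedSpace ℝ E]
    (L : E →L[ℝ] F) (a b : E) (s : ℝ) :
    HasDerivAt (fun t => L (a + t • b)) (L b) s := by
  have e : (fun t : ℝ => L (a + t • b)) = fun t => L a + t • L b := by
    funext t; rw [map_add, map_smul]
  rw [e]
  simpa using ((hasDerivAt_id s).smul_const (L b)).const_add (L a)

lemma hd_snd (L : ((Fin n → ℝ) × ℝ) →L[ℝ] F) (a : Fin n → ℝ) (s : ℝ) :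
    HasDerivAt (fun t => L (a, t)) (L ((0 : Fin n → ℝ), (1 : ℝ))) s := by
  have e : (fun t : ℝ => L (a, t))
      = fun t => L ((a, (0:ℝ)) + t • ((0 : Fin n → ℝ), (1:ℝ))) := by
    funext t
    congr 1
    rw [Prod.smul_mk, Prod.mk_add_mk]
    simp
  rw [e]
  exact hasDerivAt_clm_line L _ _ s

lemma hd_upd (L : ((Fin n → ℝ) × ℝ) →L[ℝ] F) (c : Fin n → ℝ) (i : Fin n) (r : ℝ) (s : ℝ) :
    HasDerivAt (fun t => L (Function.update c i t, r))
      (L ((Pi.single i 1 : Fin n → ℝ), (0 : ℝ))) s := by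
  have e : (fun t : ℝ => L (Function.update c i t, r))
      = fun t => L ((Function.update c i 0, r)
          + t • ((Pi.single i 1 : Fin n → ℝ), (0:ℝ))) := by
    funext t
    congr 1
    rw [Prod.smul_mk, Prod.mk_add_mk]
    refine Prod.ext ?_ (by simp)
    funext j
    by_cases hj : j = i
    · subst hj; simp
    · simp [Function.update_of_ne hj, Pi.single_eq_of_ne hj]
  rw [e]
  exact hasDerivAt_clm_line L _ _ s

lemma hdD2 (M : ((Fin n → ℝ) × ℝ) →L[ℝ] (((Fin n → ℝ) × ℝ) →L[ℝ] ℝ)) (a : Fin n → ℝ)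
    (w : (Fin n → ℝ) × ℝ) (s : ℝ) :
    HasDerivAt (fun t => M (a, t) w) (M ((0 : Fin n → ℝ), (1 : ℝ)) w) s := by
  simpa using (hd_snd M a s).clm_apply (hasDerivAt_const s w)

lemma hdquad (M : ((Fin n → ℝ) × ℝ) →L[ℝ] (((Fin n → ℝ) × ℝ) →L[ℝ] ℝ)) (a : Fin n → ℝ)
    (s : ℝ) :
    HasDerivAt (fun t => M (a, t) (a, t))
      (M ((0 : Fin n → ℝ), (1 : ℝ)) (a, s) + M (a, s) ((0 : Fin n → ℝ), (1 : ℝ))) s := by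
  have hu : HasDerivAt (fun t : ℝ => ((a, t) : (Fin n → ℝ) × ℝ))
      (((0 : Fin n → ℝ), (1 : ℝ)) : (Fin n → ℝ) × ℝ) s :=
    (hasDerivAt_const s a).prodMk (hasDerivAt_id s)
  exact (hd_snd M a s).clm_apply hu

end LineDerivs

end XbihamAux



set_option maxHeartbeats 2000000

/-- For densities `G = Σᵢ hᵢ(u,uⁱ_x)` and `H = Σᵢ uⁱhᵢ(u,uⁱ_x)` with `hᵢ` depending
only on `u` and `uⁱ_x`, the components of `X` satisfy
`∂Xⁱ/∂uⁱ_xx = (3/2)fⁱ uⁱ_x ∂²hᵢ/∂(uⁱ_x)²`. -/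
theorem coefficient_of_uxx_in_Xbiham (n : ℕ)
    (f : Fin n → (Fin n → ℝ) → ℝ) (h : Fin n → ((Fin n → ℝ) × ℝ) → ℝ)
    (hf : ∀ i, ContDiff ℝ (⊤ : ℕ∞) (f i))
    (hfne : ∀ i u, f i u ≠ 0)
    (hh : ∀ i, ContDiff ℝ (⊤ : ℕ∞) (h i))
    (i : Fin n) (u ux uxx uxxx : Fin n → ℝ) :
    deriv (fun s => Xbiham n f h i u ux (Function.update uxx i s) uxxx) (uxx i) =
      (3 / 2) * f i u * ux i *
        deriv (fun s => deriv (fun r => h i (u, r)) s) (ux i) := by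
  have funeq : (fun s => Xbiham n f h i u ux (Function.update uxx i s) uxxx)
      = fun s => u i * f i u *
                ((∑ x, fderiv ℝ (fderiv ℝ (h x)) (u, ux x)
                      (ux, Function.update uxx i s x) ((Pi.single i 1 : Fin n → ℝ), (0:ℝ))) -
                  (fderiv ℝ (fderiv ℝ fun w : (Fin n → ℝ) × ℝ =>
                        fderiv ℝ (h i) w ((0 : Fin n → ℝ), (1:ℝ))) (u, ux i) (ux, s) (ux, s) +
                    fderiv ℝ (fun w : (Fin n → ℝ) × ℝ =>
                        fderiv ℝ (h i) w ((0 : Fin n → ℝ), (1:ℝ))) (u, ux i)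
                      (Function.update uxx i s, uxxx i))) +
              1 / 2 * fderiv ℝ (fun w : Fin n → ℝ => w i * f i w) u ux *
                ((∑ x, fderiv ℝ (h x) (u, ux x) ((Pi.single i 1 : Fin n → ℝ), (0:ℝ))) -
                  fderiv ℝ (fun w : (Fin n → ℝ) × ℝ =>
                      fderiv ℝ (h i) w ((0 : Fin n → ℝ), (1:ℝ))) (u, ux i) (ux, s)) +
            (∑ x, 1 / 2 *
                  (u i * f i u / f x u * fderiv ℝ (f x) u (Pi.single i 1) * ux x -
                    u x * f x u / f i u * fderiv ℝ (f i) u (Pi.single x 1) * ux i) *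
                ((∑ x_1, fderiv ℝ (h x_1) (u, ux x_1) ((Pi.single x 1 : Fin n → ℝ), (0:ℝ))) -
                  fderiv ℝ (fun p : (Fin n → ℝ) × ℝ =>
                      fderiv ℝ (h x) p ((0 : Fin n → ℝ), (1:ℝ))) (u, ux x)
                    (ux, Function.update uxx i s x))) -
          f i u *
            (fderiv ℝ (h i) (u, ux i) (ux, s) +
                (∑ x, (u x * fderiv ℝ (fderiv ℝ (h x)) (u, ux x)
                      (ux, Function.update uxx i s x) ((Pi.single i 1 : Fin n → ℝ), (0:ℝ)) +
                    fderiv ℝ (h x) (u, ux x) ((Pi.single i 1 : Fin n → ℝ), (0:ℝ)) * ux x)) -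
              (u i *
                    (fderiv ℝ (fun w : (Fin n → ℝ) × ℝ =>
                          fderiv ℝ (h i) w ((0 : Fin n → ℝ), (1:ℝ))) (u, ux i)
                        (Function.update uxx i s, uxxx i) +
                      fderiv ℝ (fderiv ℝ fun w : (Fin n → ℝ) × ℝ =>
                          fderiv ℝ (h i) w ((0 : Fin n → ℝ), (1:ℝ))) (u, ux i) (ux, s) (ux, s)) +
                  fderiv ℝ (fun w : (Fin n → ℝ) × ℝ =>
                      fderiv ℝ (h i) w ((0 : Fin n → ℝ), (1:ℝ))) (u, ux i) (ux, s) * ux i +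
                (fderiv ℝ (h i) (u, ux i) ((0 : Fin n → ℝ), (1:ℝ)) * s +
                  ux i * fderiv ℝ (fun w : (Fin n → ℝ) × ℝ =>
                      fderiv ℝ (h i) w ((0 : Fin n → ℝ), (1:ℝ))) (u, ux i) (ux, s)))) -
        1 / 2 * fderiv ℝ (f i) u ux *
          (h i (u, ux i) + (∑ x, u x * fderiv ℝ (h x) (u, ux x)
                ((Pi.single i 1 : Fin n → ℝ), (0:ℝ))) -
            (u i * fderiv ℝ (fun w : (Fin n → ℝ) × ℝ =>
                  fderiv ℝ (h i) w ((0 : Fin n → ℝ), (1:ℝ))) (u, ux i) (ux, s) +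
              fderiv ℝ (h i) (u, ux i) ((0 : Fin n → ℝ), (1:ℝ)) * ux i)) -
      ∑ x, 1 / 2 *
            (f i u / f x u * fderiv ℝ (f x) u (Pi.single i 1) * ux x -
              f x u / f i u * fderiv ℝ (f i) u (Pi.single x 1) * ux i) *
          (h x (u, ux x) + (∑ x_1, u x_1 * fderiv ℝ (h x_1) (u, ux x_1)
                ((Pi.single x 1 : Fin n → ℝ), (0:ℝ))) -
            (u x * fderiv ℝ (fun p : (Fin n → ℝ) × ℝ =>
                  fderiv ℝ (h x) p ((0 : Fin n → ℝ), (1:ℝ))) (u, ux x)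
                (ux, Function.update uxx i s x) +
              fderiv ℝ (h x) (u, ux x) ((0 : Fin n → ℝ), (1:ℝ)) * ux x)) := by
    funext s
    simp only [Xbiham]
    rw [fderiv_eulOp_G_apply hh, fderiv_eulOp_H_apply hh]
    simp only [eulOp_G_eq hh, eulOp_H_eq hh, Function.update_self]
  rw [funeq]
  -- right-hand side in closed form
  have hR : ContDiff ℝ (⊤ : ℕ∞) (fun w : (Fin n → ℝ) × ℝ => fderiv ℝ (h i) w ((0 : Fin n → ℝ), (1:ℝ))) := contDiff_fderiv_apply (hh i) _
  have hrhs1 : ∀ s : ℝ, deriv (fun r => h i (u, r)) s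
      = fderiv ℝ (h i) (u, s) ((0 : Fin n → ℝ), (1:ℝ)) := by
    intro s
    exact (HasFDerivAt.comp_hasDerivAt s
      (((hh i).differentiable top_le' (u, s)).hasFDerivAt)
      ((hasDerivAt_const s u).prodMk (hasDerivAt_id s))).deriv
  have hrhs2 : deriv (fun s => deriv (fun r => h i (u, r)) s) (ux i)
      = fderiv ℝ (fun w : (Fin n → ℝ) × ℝ => fderiv ℝ (h i) w ((0 : Fin n → ℝ), (1:ℝ))) (u, ux i) ((0 : Fin n → ℝ), (1:ℝ)) := by
    rw [show (fun s => deriv (fun r => h i (u, r)) s)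
        = (fun s => fderiv ℝ (h i) (u, s) ((0 : Fin n → ℝ), (1:ℝ))) from funext hrhs1]
    exact (HasFDerivAt.comp_hasDerivAt (ux i)
      ((hR.differentiable top_le' (u, ux i)).hasFDerivAt)
      ((hasDerivAt_const (ux i) u).prodMk (hasDerivAt_id (ux i)))).deriv
  rw [hrhs2]
  -- the derivative of the product density coefficient
  have hdg : fderiv ℝ (fun w : Fin n → ℝ => w i * f i w) u ux
      = u i * fderiv ℝ (f i) u ux + f i u * ux i := by
    have hmul : HasFDerivAt (fun w : Fin n → ℝ => w i * f i w)
        (u i • fderiv ℝ (f i) u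
          + f i u • (ContinuousLinearMap.proj i : (Fin n → ℝ) →L[ℝ] ℝ)) u :=
      HasFDerivAt.mul
        ((ContinuousLinearMap.proj i : (Fin n → ℝ) →L[ℝ] ℝ).hasFDerivAt (x := u))
        (((hf i).differentiable top_le' u).hasFDerivAt)
    rw [hmul.fderiv]
    simp [smul_eq_mul]
  -- building blocks
  have hS1 : HasDerivAt (fun s => ∑ x, fderiv ℝ (fderiv ℝ (h x)) (u, ux x)
      (ux, Function.update uxx i s x) ((Pi.single i 1 : Fin n → ℝ), (0:ℝ))) (fderiv ℝ (fderiv ℝ (h i)) (u, ux i) ((0 : Fin n → ℝ), (1:ℝ)) ((Pi.single i 1 : Fin n → ℝ), (0:ℝ))) (uxx i) := by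
    have e : ∀ x : Fin n, HasDerivAt (fun s => fderiv ℝ (fderiv ℝ (h x)) (u, ux x)
        (ux, Function.update uxx i s x) ((Pi.single i 1 : Fin n → ℝ), (0:ℝ)))
        (if x = i then fderiv ℝ (fderiv ℝ (h i)) (u, ux i) ((0 : Fin n → ℝ), (1:ℝ)) ((Pi.single i 1 : Fin n → ℝ), (0:ℝ)) else 0) (uxx i) := by
      intro x
      by_cases hx : x = i
      · rw [if_pos hx]
        simp only [Function.update_apply, hx, eq_self_iff_true, if_true]
        exact hdD2 _ ux _ (uxx i)
      · simp only [Function.update_apply, if_neg hx]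
        exact hasDerivAt_const _ _
    have := HasDerivAt.fun_sum (fun x (_ : x ∈ Finset.univ) => e x)
    rw [Fintype.sum_ite_eq' i (fun _ => fderiv ℝ (fderiv ℝ (h i)) (u, ux i) ((0 : Fin n → ℝ), (1:ℝ)) ((Pi.single i 1 : Fin n → ℝ), (0:ℝ)))] at this
    exact this
  have hQ : HasDerivAt (fun s => fderiv ℝ (fderiv ℝ (fun w : (Fin n → ℝ) × ℝ => fderiv ℝ (h i) w ((0 : Fin n → ℝ), (1:ℝ)))) (u, ux i) (ux, s) (ux, s)) ((fderiv ℝ (fderiv ℝ (fun w : (Fin n → ℝ) × ℝ => fderiv ℝ (h i) w ((0 : Fin n → ℝ), (1:ℝ)))) (u, ux i) ((0 : Fin n → ℝ), (1:ℝ)) (ux, uxx i) + fderiv ℝ (fderiv ℝ (fun w : (Fin n → ℝ) × ℝ => fderiv ℝ (h i) w ((0 : Fin n → ℝ), (1:ℝ)))) (u, ux i) (ux, uxx i) ((0 : Fin n → ℝ), (1:ℝ)))) (uxx i) :=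
    hdquad _ ux (uxx i)
  have hR1 : HasDerivAt (fun s => fderiv ℝ (fun w : (Fin n → ℝ) × ℝ => fderiv ℝ (h i) w ((0 : Fin n → ℝ), (1:ℝ))) (u, ux i) (Function.update uxx i s, uxxx i)) (fderiv ℝ (fun w : (Fin n → ℝ) × ℝ => fderiv ℝ (h i) w ((0 : Fin n → ℝ), (1:ℝ))) (u, ux i) ((Pi.single i 1 : Fin n → ℝ), (0:ℝ))) (uxx i) :=
    hd_upd _ uxx i (uxxx i) (uxx i)
  have hT1 := ((hS1.fun_sub (hQ.fun_add hR1)).const_mul (u i * f i u))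
  have hT2 := (((hasDerivAt_const (uxx i)
      (∑ x, fderiv ℝ (h x) (u, ux x) ((Pi.single i 1 : Fin n → ℝ), (0:ℝ)))).fun_sub
        (hd_snd (fderiv ℝ (fun w : (Fin n → ℝ) × ℝ => fderiv ℝ (h i) w ((0 : Fin n → ℝ), (1:ℝ))) (u, ux i)) ux (uxx i))).const_mul
      (1 / 2 * fderiv ℝ (fun w : Fin n → ℝ => w i * f i w) u ux))
  have hT3 : HasDerivAt (fun s => ∑ x, 1 / 2 *
        (u i * f i u / f x u * fderiv ℝ (f x) u (Pi.single i 1) * ux x -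
          u x * f x u / f i u * fderiv ℝ (f i) u (Pi.single x 1) * ux i) *
      ((∑ x_1, fderiv ℝ (h x_1) (u, ux x_1) ((Pi.single x 1 : Fin n → ℝ), (0:ℝ))) -
        fderiv ℝ (fun p : (Fin n → ℝ) × ℝ =>
            fderiv ℝ (h x) p ((0 : Fin n → ℝ), (1:ℝ))) (u, ux x)
          (ux, Function.update uxx i s x)))
      ((1 / 2 * (u i * f i u / f i u * fderiv ℝ (f i) u (Pi.single i 1) * ux i - u i * f i u / f i u * fderiv ℝ (f i) u (Pi.single i 1) * ux i)) * (0 - fderiv ℝ (fun w : (Fin n → ℝ) × ℝ => fderiv ℝ (h i) w ((0 : Fin n → ℝ), (1:ℝ))) (u, ux i) ((0 : Fin n → ℝ), (1:ℝ)))) (uxx i) := by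
    have e : ∀ x : Fin n, HasDerivAt (fun s => 1 / 2 *
        (u i * f i u / f x u * fderiv ℝ (f x) u (Pi.single i 1) * ux x -
          u x * f x u / f i u * fderiv ℝ (f i) u (Pi.single x 1) * ux i) *
      ((∑ x_1, fderiv ℝ (h x_1) (u, ux x_1) ((Pi.single x 1 : Fin n → ℝ), (0:ℝ))) -
        fderiv ℝ (fun p : (Fin n → ℝ) × ℝ =>
            fderiv ℝ (h x) p ((0 : Fin n → ℝ), (1:ℝ))) (u, ux x)
          (ux, Function.update uxx i s x)))
        (if x = i then (1 / 2 * (u i * f i u / f i u * fderiv ℝ (f i) u (Pi.single i 1) * ux i - u i * f i u / f i u * fderiv ℝ (f i) u (Pi.single i 1) * ux i)) * (0 - fderiv ℝ (fun w : (Fin n → ℝ) × ℝ => fderiv ℝ (h i) w ((0 : Fin n → ℝ), (1:ℝ))) (u, ux i) ((0 : Fin n → ℝ), (1:ℝ))) else 0) (uxx i) := by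
      intro x
      by_cases hx : x = i
      · rw [if_pos hx]
        simp only [Function.update_apply, hx, eq_self_iff_true, if_true]
        exact ((hasDerivAt_const _ _).sub (hd_snd _ ux _)).const_mul _
      · simp only [Function.update_apply, if_neg hx]
        exact hasDerivAt_const _ _
    have := HasDerivAt.fun_sum (fun x (_ : x ∈ Finset.univ) => e x)
    rw [Fintype.sum_ite_eq' i (fun _ => (1 / 2 * (u i * f i u / f i u * fderiv ℝ (f i) u (Pi.single i 1) * ux i - u i * f i u / f i u * fderiv ℝ (f i) u (Pi.single i 1) * ux i)) * (0 - fderiv ℝ (fun w : (Fin n → ℝ) × ℝ => fderiv ℝ (h i) w ((0 : Fin n → ℝ), (1:ℝ))) (u, ux i) ((0 : Fin n → ℝ), (1:ℝ))))] at this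
    exact this
  have hS2 : HasDerivAt (fun s => ∑ x, (u x * fderiv ℝ (fderiv ℝ (h x)) (u, ux x)
        (ux, Function.update uxx i s x) ((Pi.single i 1 : Fin n → ℝ), (0:ℝ))
      + fderiv ℝ (h x) (u, ux x) ((Pi.single i 1 : Fin n → ℝ), (0:ℝ)) * ux x))
      (u i * (fderiv ℝ (fderiv ℝ (h i)) (u, ux i) ((0 : Fin n → ℝ), (1:ℝ)) ((Pi.single i 1 : Fin n → ℝ), (0:ℝ)))) (uxx i) := by
    have e : ∀ x : Fin n, HasDerivAt (fun s => u x * fderiv ℝ (fderiv ℝ (h x)) (u, ux x)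
          (ux, Function.update uxx i s x) ((Pi.single i 1 : Fin n → ℝ), (0:ℝ))
        + fderiv ℝ (h x) (u, ux x) ((Pi.single i 1 : Fin n → ℝ), (0:ℝ)) * ux x)
        (if x = i then u i * (fderiv ℝ (fderiv ℝ (h i)) (u, ux i) ((0 : Fin n → ℝ), (1:ℝ)) ((Pi.single i 1 : Fin n → ℝ), (0:ℝ))) else 0) (uxx i) := by
      intro x
      by_cases hx : x = i
      · rw [if_pos hx]
        simp only [Function.update_apply, hx, eq_self_iff_true, if_true]
        exact ((hdD2 _ ux _ (uxx i)).const_mul (u i)).add_const _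
      · simp only [Function.update_apply, if_neg hx]
        exact hasDerivAt_const _ _
    have := HasDerivAt.fun_sum (fun x (_ : x ∈ Finset.univ) => e x)
    rw [Fintype.sum_ite_eq' i (fun _ => u i * (fderiv ℝ (fderiv ℝ (h i)) (u, ux i) ((0 : Fin n → ℝ), (1:ℝ)) ((Pi.single i 1 : Fin n → ℝ), (0:ℝ))))] at this
    exact this
  have ha : HasDerivAt (fun s => fderiv ℝ (h i) (u, ux i) (ux, s)) (fderiv ℝ (h i) (u, ux i) ((0 : Fin n → ℝ), (1:ℝ))) (uxx i) :=
    hd_snd _ ux (uxx i)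
  have hb1 := (hR1.fun_add hQ).const_mul (u i)
  have hb2 := (hd_snd (fderiv ℝ (fun w : (Fin n → ℝ) × ℝ => fderiv ℝ (h i) w ((0 : Fin n → ℝ), (1:ℝ))) (u, ux i)) ux (uxx i)).mul_const (ux i)
  have hb3 : HasDerivAt (fun s : ℝ => fderiv ℝ (h i) (u, ux i) ((0 : Fin n → ℝ), (1:ℝ)) * s) (fderiv ℝ (h i) (u, ux i) ((0 : Fin n → ℝ), (1:ℝ)) * 1) (uxx i) :=
    HasDerivAt.const_mul _ (hasDerivAt_id (uxx i))
  have hb4 := (hd_snd (fderiv ℝ (fun w : (Fin n → ℝ) × ℝ => fderiv ℝ (h i) w ((0 : Fin n → ℝ), (1:ℝ))) (u, ux i)) ux (uxx i)).const_mul (ux i)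
  have hT4 := (((ha.fun_add hS2).fun_sub ((hb1.fun_add hb2).fun_add (hb3.fun_add hb4))).const_mul (f i u))
  have hT5 := (((hasDerivAt_const (uxx i) (h i (u, ux i)
      + ∑ x, u x * fderiv ℝ (h x) (u, ux x) ((Pi.single i 1 : Fin n → ℝ), (0:ℝ)))).fun_sub
        (((hd_snd (fderiv ℝ (fun w : (Fin n → ℝ) × ℝ => fderiv ℝ (h i) w ((0 : Fin n → ℝ), (1:ℝ))) (u, ux i)) ux (uxx i)).const_mul (u i)).add_const
          (fderiv ℝ (h i) (u, ux i) ((0 : Fin n → ℝ), (1:ℝ)) * ux i))).const_mul (1 / 2 * fderiv ℝ (f i) u ux))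
  have hT6 : HasDerivAt (fun s => ∑ x, 1 / 2 *
        (f i u / f x u * fderiv ℝ (f x) u (Pi.single i 1) * ux x -
          f x u / f i u * fderiv ℝ (f i) u (Pi.single x 1) * ux i) *
      (h x (u, ux x) + (∑ x_1, u x_1 * fderiv ℝ (h x_1) (u, ux x_1)
            ((Pi.single x 1 : Fin n → ℝ), (0:ℝ))) -
        (u x * fderiv ℝ (fun p : (Fin n → ℝ) × ℝ =>
              fderiv ℝ (h x) p ((0 : Fin n → ℝ), (1:ℝ))) (u, ux x)
            (ux, Function.update uxx i s x) +
          fderiv ℝ (h x) (u, ux x) ((0 : Fin n → ℝ), (1:ℝ)) * ux x)))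
      ((1 / 2 * (f i u / f i u * fderiv ℝ (f i) u (Pi.single i 1) * ux i - f i u / f i u * fderiv ℝ (f i) u (Pi.single i 1) * ux i)) * (0 - u i * (fderiv ℝ (fun w : (Fin n → ℝ) × ℝ => fderiv ℝ (h i) w ((0 : Fin n → ℝ), (1:ℝ))) (u, ux i) ((0 : Fin n → ℝ), (1:ℝ))))) (uxx i) := by
    have e : ∀ x : Fin n, HasDerivAt (fun s => 1 / 2 *
        (f i u / f x u * fderiv ℝ (f x) u (Pi.single i 1) * ux x -
          f x u / f i u * fderiv ℝ (f i) u (Pi.single x 1) * ux i) *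
      (h x (u, ux x) + (∑ x_1, u x_1 * fderiv ℝ (h x_1) (u, ux x_1)
            ((Pi.single x 1 : Fin n → ℝ), (0:ℝ))) -
        (u x * fderiv ℝ (fun p : (Fin n → ℝ) × ℝ =>
              fderiv ℝ (h x) p ((0 : Fin n → ℝ), (1:ℝ))) (u, ux x)
            (ux, Function.update uxx i s x) +
          fderiv ℝ (h x) (u, ux x) ((0 : Fin n → ℝ), (1:ℝ)) * ux x)))
        (if x = i then (1 / 2 * (f i u / f i u * fderiv ℝ (f i) u (Pi.single i 1) * ux i - f i u / f i u * fderiv ℝ (f i) u (Pi.single i 1) * ux i)) * (0 - u i * (fderiv ℝ (fun w : (Fin n → ℝ) × ℝ => fderiv ℝ (h i) w ((0 : Fin n → ℝ), (1:ℝ))) (u, ux i) ((0 : Fin n → ℝ), (1:ℝ)))) else 0) (uxx i) := by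
      intro x
      by_cases hx : x = i
      · rw [if_pos hx]
        simp only [Function.update_apply, hx, eq_self_iff_true, if_true]
        exact (((hasDerivAt_const _ _).sub
          (((hd_snd _ ux _).const_mul (u i)).add_const _)).const_mul _)
      · simp only [Function.update_apply, if_neg hx]
        exact hasDerivAt_const _ _
    have := HasDerivAt.fun_sum (fun x (_ : x ∈ Finset.univ) => e x)
    rw [Fintype.sum_ite_eq' i (fun _ => (1 / 2 * (f i u / f i u * fderiv ℝ (f i) u (Pi.single i 1) * ux i - f i u / f i u * fderiv ℝ (f i) u (Pi.single i 1) * ux i)) * (0 - u i * (fderiv ℝ (fun w : (Fin n → ℝ) × ℝ => fderiv ℝ (h i) w ((0 : Fin n → ℝ), (1:ℝ))) (u, ux i) ((0 : Fin n → ℝ), (1:ℝ)))))] at this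
    exact this
  have Htot := ((((hT1.fun_add hT2).fun_add hT3).fun_sub hT4).fun_sub hT5).fun_sub hT6
  rw [Htot.deriv, hdg]
  ring
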